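/- Suppose m = m_n and p = p_n satisfy n = o(m) and n p / ln(m/n) → ∞ as n → ∞, and set ε = ε_n = √( 6 ln( (3/4)·(m/n) ) / (n p) ) and δ = (8/3)·(n/m). For S ⊆ 𝒱 let M_S = |{ i ∈ [m] : | |𝒱(w_i) ∩ S| − |S| p | ≥ ε |S| p }|. Then the probability that there exists a set S ⊆ 𝒱 with |S| ≥ n/2 and M_S ≥ 2 δ m tends to 0 as n → ∞; in fact for each fixed such S this probability is at most e^{−n}. -/

import Mathlib

open MeasureTheory Filter Topology
open scoped Classical

namespace RIG

variable {V : Type*}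

/-- The number of edges of a graph. -/
noncomputable def edgeCount [Fintype V] (G : SimpleGraph V) : ℕ := G.edgeSet.ncard

/-- The number of edges of `G` with both endpoints in `S`. -/
noncomputable def edgesIn [Fintype V] (G : SimpleGraph V) (S : Finset V) : ℕ :=
  {e ∈ G.edgeSet | ∀ v ∈ e, v ∈ S}.ncard

/-- The number of edges of `G` with exactly one endpoint in `S`. -/
noncomputable def crossEdges [Fintype V] (G : SimpleGraph V) (S : Finset V) : ℕ :=
  {e ∈ G.edgeSet | (∃ v ∈ e, v ∈ S) ∧ ∃ v ∈ e, v ∉ S}.ncard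

/-- The sum of the degrees (in `G`) of the vertices of `S`. -/
noncomputable def vol [Fintype V] (G : SimpleGraph V) (S : Finset V) : ℕ :=
  ∑ v ∈ S, G.degree v

/-- The modularity score of a partition of the vertex set. -/
noncomputable def modScore [Fintype V] [DecidableEq V] (G : SimpleGraph V)
    (P : Finpartition (Finset.univ : Finset V)) : ℝ :=
  ∑ S ∈ P.parts,
    ((edgesIn G S : ℝ) / (edgeCount G : ℝ) -
      ((vol G S : ℝ) / (vol G Finset.univ : ℝ)) ^ 2)

/-- The modularity of a graph: the maximum of the modularity scores over all
partitions of the vertex set. -/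
noncomputable def modularity [Fintype V] [DecidableEq V] (G : SimpleGraph V) : ℝ :=
  ⨆ P : Finpartition (Finset.univ : Finset V), modScore G P

/-- The Bernoulli measure on `Bool` with success probability `p`. -/
noncomputable def bernoulliB (p : ℝ) : Measure Bool :=
  ENNReal.ofReal p • Measure.dirac true + ENNReal.ofReal (1 - p) • Measure.dirac false

/-- The law of the attribute assignment of the binomial random intersection graph
`G(n,m,p)`: each vertex chooses each attribute independently with probability `p`. -/
noncomputable def rigMeasure (n m : ℕ) (p : ℝ) : Measure (Fin n → Fin m → Bool) :=
  Measure.pi fun _ => Measure.pi fun _ => bernoulliB p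

/-- The intersection graph determined by an attribute assignment: two distinct vertices
are adjacent iff they share an attribute. -/
def rigGraph {n m : ℕ} (ω : Fin n → Fin m → Bool) : SimpleGraph (Fin n) :=
  SimpleGraph.fromRel fun u v => ∃ i, ω u i = true ∧ ω v i = true

/-- `ε_n = √( 6 ln((3/4)(m/n)) / (np) )`. -/
noncomputable def epsn (m : ℕ → ℕ) (p : ℕ → ℝ) (n : ℕ) : ℝ :=
  Real.sqrt (6 * Real.log (3 / 4 * ((m n : ℝ) / (n : ℝ))) / ((n : ℝ) * p n))

/-- `δ = (8/3)(n/m)`. -/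
noncomputable def deltan (m : ℕ → ℕ) (n : ℕ) : ℝ :=
  8 / 3 * ((n : ℝ) / (m n : ℝ))

/-- `X_{i,S} = |𝒱(w_i) ∩ S|`. -/
def XS {n m : ℕ} (ω : Fin n → Fin m → Bool) (i : Fin m) (S : Finset (Fin n)) : ℕ :=
  (S.filter fun v => ω v i = true).card

/-- `M_S = |{ i ∈ [m] : | X_{i,S} - |S| p | ≥ ε |S| p }|`. -/
noncomputable def MS {n m : ℕ} (ω : Fin n → Fin m → Bool) (S : Finset (Fin n))
    (ε q : ℝ) : ℕ :=
  (Finset.univ.filter fun i : Fin m =>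
    ε * ((S.card : ℝ) * q) ≤ |(XS ω i S : ℝ) - (S.card : ℝ) * q|).card



set_option maxHeartbeats 1000000

section Aux
open ProbabilityTheory

lemma measurableSet_of_countable {α : Type*} [MeasurableSpace α] [Countable α]
    [MeasurableSingletonClass α] (s : Set α) : MeasurableSet s :=
  s.to_countable.measurableSet

lemma bernoulliB_isProb {p : ℝ} (h0 : 0 ≤ p) (h1 : p ≤ 1) :
    IsProbabilityMeasure (bernoulliB p) := by
  constructor
  simp only [bernoulliB, Measure.add_apply, Measure.smul_apply, measure_univ, smul_eq_mul, mul_one]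
  rw [← ENNReal.ofReal_add h0 (by linarith)]
  norm_num

lemma pi_meas_biInter {ι : Type*} [Fintype ι] {α : ι → Type*} [∀ i, MeasurableSpace (α i)]
    (μ : ∀ i, Measure (α i)) [∀ i, IsProbabilityMeasure (μ i)]
    (s : Finset ι) (C : ∀ i, Set (α i)) :
    Measure.pi μ {x | ∀ i ∈ s, x i ∈ C i} = ∏ i ∈ s, μ i (C i) := by
  classical
  have h1 : {x : ∀ i, α i | ∀ i ∈ s, x i ∈ C i}
      = Set.pi Set.univ (fun i => if i ∈ s then C i else Set.univ) := by
    ext x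
    simp only [Set.mem_setOf_eq, Set.mem_pi, Set.mem_univ, forall_true_left]
    constructor
    · intro h i
      split_ifs with hi
      · exact h i hi
      · exact Set.mem_univ _
    · intro h i hi
      have := h i
      rwa [if_pos hi] at this
  rw [h1, Measure.pi_pi]
  have h2 : ∀ i, μ i (if i ∈ s then C i else Set.univ) = if i ∈ s then μ i (C i) else 1 := by
    intro i; split_ifs <;> simp
  simp_rw [h2, Finset.prod_ite_mem, Finset.univ_inter]

lemma pi_meas_eval {ι : Type*} [Fintype ι] {β : Type*} [MeasurableSpace β]
    (μ : Measure β) [IsProbabilityMeasure μ] (i : ι) (B : Set β) :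
    Measure.pi (fun _ : ι => μ) ((fun x => x i) ⁻¹' B) = μ B := by
  have h := pi_meas_biInter (fun _ : ι => μ) {i} (fun _ => B)
  have h2 : {x : ι → β | ∀ j ∈ ({i} : Finset ι), x j ∈ B} = (fun x : ι → β => x i) ⁻¹' B := by
    ext x; simp
  rw [h2] at h
  simpa using h

lemma map_eval {ι : Type*} [Fintype ι] {β : Type*} [MeasurableSpace β]
    (μ : Measure β) [IsProbabilityMeasure μ] (i : ι) :
    (Measure.pi (fun _ : ι => μ)).map (fun x => x i) = μ := by
  ext B hB
  rw [Measure.map_apply (measurable_pi_apply i) hB, pi_meas_eval]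

lemma rig_map_swap (n m : ℕ) {p : ℝ} (h0 : 0 ≤ p) (h1 : p ≤ 1) :
    (rigMeasure n m p).map (fun ω (i : Fin m) (v : Fin n) => ω v i)
      = Measure.pi (fun _ : Fin m => Measure.pi (fun _ : Fin n => bernoulliB p)) := by
  haveI := bernoulliB_isProb h0 h1
  apply MeasureTheory.Measure.ext_of_singleton
  intro η
  rw [Measure.map_apply (measurable_of_countable _) (measurableSet_singleton _)]
  have hpre : (fun ω (i : Fin m) (v : Fin n) => ω v i) ⁻¹' {η} = {fun v i => η i v} := by
    ext ω
    simp only [Set.mem_preimage, Set.mem_singleton_iff]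
    constructor
    · intro h
      funext v i
      exact congrFun (congrFun h i) v
    · intro h
      subst h
      rfl
  rw [hpre]
  rw [show ({fun v i => η i v} : Set (Fin n → Fin m → Bool))
      = Set.pi Set.univ (fun v => {fun i => η i v}) from (Set.univ_pi_singleton _).symm,
    rigMeasure, Measure.pi_pi]
  rw [show ({η} : Set (Fin m → Fin n → Bool))
      = Set.pi Set.univ (fun i => {η i}) from (Set.univ_pi_singleton _).symm,
    Measure.pi_pi]
  have e1 : ∀ v : Fin n, (Measure.pi fun _ : Fin m => bernoulliB p) {fun i => η i v}
      = ∏ i, bernoulliB p {η i v} := by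
    intro v
    rw [← Set.univ_pi_singleton, Measure.pi_pi]
  have e2 : ∀ i : Fin m, (Measure.pi fun _ : Fin n => bernoulliB p) {η i}
      = ∏ v, bernoulliB p {η i v} := by
    intro i
    rw [← Set.univ_pi_singleton, Measure.pi_pi]
  simp_rw [e1, e2]
  exact Finset.prod_comm

lemma iIndepFun_eval (n : ℕ) {β : Type*} [MeasurableSpace β] (μ : Measure β)
    [IsProbabilityMeasure μ] :
    iIndepFun (fun v (x : Fin n → β) => x v)
      (Measure.pi fun _ => μ) := by
  rw [iIndepFun_iff_measure_inter_preimage_eq_mul]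
  intro s sets _
  have h1 : (⋂ i ∈ s, (fun x : Fin n → β => x i) ⁻¹' sets i) = {x | ∀ i ∈ s, x i ∈ sets i} := by
    ext x; simp
  rw [h1, pi_meas_biInter]
  exact Finset.prod_congr rfl fun i _ => (pi_meas_eval μ i (sets i)).symm

lemma integral_bernoulliB {p : ℝ} (h0 : 0 ≤ p) (h1 : p ≤ 1) (f : Bool → ℝ) :
    ∫ b, f b ∂(bernoulliB p) = p * f true + (1 - p) * f false := by
  haveI : IsProbabilityMeasure (bernoulliB p) := bernoulliB_isProb h0 h1
  rw [bernoulliB, integral_add_measure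
      ((Integrable.of_finite).smul_measure ENNReal.ofReal_ne_top)
      ((Integrable.of_finite).smul_measure ENNReal.ofReal_ne_top),
    integral_smul_measure, integral_smul_measure, integral_dirac, integral_dirac,
    ENNReal.toReal_ofReal h0, ENNReal.toReal_ofReal (by linarith : (0:ℝ) ≤ 1 - p)]
  simp [smul_eq_mul]

lemma mgf_coord {n : ℕ} {p : ℝ} (h0 : 0 ≤ p) (h1 : p ≤ 1) (v : Fin n) (W : Bool → ℝ) (t : ℝ) :
    mgf (fun x : Fin n → Bool => W (x v)) (Measure.pi fun _ => bernoulliB p) t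
      = p * Real.exp (t * W true) + (1 - p) * Real.exp (t * W false) := by
  haveI := bernoulliB_isProb h0 h1
  rw [mgf]
  have h : ∫ x, Real.exp (t * W (x v)) ∂(Measure.pi fun _ : Fin n => bernoulliB p)
      = ∫ b, Real.exp (t * W b) ∂(bernoulliB p) := by
    conv_rhs => rw [← map_eval (μ := bernoulliB p) (ι := Fin n) v]
    rw [integral_map (measurable_pi_apply v).aemeasurable
      ((measurable_of_countable _).aestronglyMeasurable)]
  rw [h, integral_bernoulliB h0 h1]

lemma exp_le_quad {x : ℝ} (hx : |x| ≤ 0.45) :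
    Real.exp x ≤ 1 + x + 0.6 * x ^ 2 := by
  have hb := Real.exp_bound (x := x) (le_trans hx (by norm_num)) (n := 3) (by norm_num)
  have hs : ∑ m ∈ Finset.range 3, x ^ m / m.factorial = 1 + x + x ^ 2 / 2 := by
    norm_num [Finset.sum_range_succ]
  rw [hs] at hb
  have h2 := (abs_le.mp hb).2
  have h5 : |x| ^ 3 = x ^ 2 * |x| := by
    rw [pow_succ, sq_abs]
  have h4 : |x| ^ 3 * ((3:ℕ).succ / ((3:ℕ).factorial * 3)) ≤ 0.1 * x ^ 2 := by
    have h6 : ((3:ℕ).succ / ((3:ℕ).factorial * 3) : ℝ) = 2/9 := by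
      norm_num [Nat.factorial]
    rw [h6, h5]
    nlinarith [abs_nonneg x, sq_nonneg x]
  linarith

lemma inner_tail {n : ℕ} {p ε : ℝ} (h0 : 0 ≤ p) (h1 : p ≤ 1)
    (hε0 : 0 ≤ ε) (hε1 : ε ≤ 0.45) (S : Finset (Fin n)) :
    ((Measure.pi fun _ : Fin n => bernoulliB p)
      {x | ε * (S.card * p) ≤ |((S.filter fun v => x v = true).card : ℝ) - S.card * p|}).toReal
      ≤ 2 * Real.exp (-(0.4 * ε ^ 2 * (S.card * p))) := by
  haveI := bernoulliB_isProb h0 h1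
  set π : Measure (Fin n → Bool) := Measure.pi fun _ : Fin n => bernoulliB p with hπ
  set sp : ℝ := S.card * p with hsp
  have hsp0 : 0 ≤ sp := by positivity
  set X : (Fin n → Bool) → ℝ := fun x => ((S.filter fun v => x v = true).card : ℝ) with hX
  set Y : Fin n → (Fin n → Bool) → ℝ := fun v x => if x v = true then 1 else 0 with hY
  have hXsum : X = ∑ v ∈ S, Y v := by
    funext x
    rw [hX]
    simp only [Finset.sum_apply]
    rw [Finset.card_filter]
    push_cast
    rfl
  have hYmeas : ∀ v, Measurable (Y v) := fun v => measurable_of_countable _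
  have hind : iIndepFun Y π :=
    (iIndepFun_eval n (bernoulliB p)).comp (fun _ b => if b = true then (1:ℝ) else 0)
      (fun _ => measurable_of_countable _)
  have hmgfY : ∀ (v : Fin n) (t : ℝ), mgf (Y v) π t = p * Real.exp t + (1 - p) := by
    intro v t
    have h := mgf_coord (n := n) h0 h1 v (fun b => if b = true then (1:ℝ) else 0) t
    rw [hπ, hY]
    simpa using h
  have hmgfX : ∀ t : ℝ, mgf X π t = (p * Real.exp t + (1 - p)) ^ S.card := by
    intro t
    rw [hXsum, hind.mgf_sum hYmeas, Finset.prod_congr rfl fun v _ => hmgfY v t,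
      Finset.prod_const]
  have hbase : ∀ t : ℝ, (p * Real.exp t + (1 - p)) ^ S.card ≤ Real.exp (sp * (Real.exp t - 1)) := by
    intro t
    have hb0 : 0 ≤ p * Real.exp t + (1 - p) :=
      add_nonneg (by positivity) (by linarith)
    have hb1 : p * Real.exp t + (1 - p) ≤ Real.exp (p * (Real.exp t - 1)) := by
      have := Real.add_one_le_exp (p * (Real.exp t - 1))
      linarith
    calc (p * Real.exp t + (1 - p)) ^ S.card
        ≤ (Real.exp (p * (Real.exp t - 1))) ^ S.card := pow_le_pow_left₀ hb0 hb1 _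
      _ = Real.exp ((S.card : ℝ) * (p * (Real.exp t - 1))) := (Real.exp_nat_mul _ _).symm
      _ = Real.exp (sp * (Real.exp t - 1)) := by rw [hsp]; ring_nf
  have hup : (π {x | (1 + ε) * sp ≤ X x}).toReal ≤ Real.exp (-(0.4 * ε ^ 2 * sp)) := by
    refine (measure_ge_le_exp_mul_mgf (μ := π) (X := X) (t := ε) ((1 + ε) * sp) hε0
      Integrable.of_finite).trans ?_
    rw [hmgfX]
    calc Real.exp (-ε * ((1 + ε) * sp)) * (p * Real.exp ε + (1 - p)) ^ S.card
        ≤ Real.exp (-ε * ((1 + ε) * sp)) * Real.exp (sp * (Real.exp ε - 1)) :=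
          mul_le_mul_of_nonneg_left (hbase ε) (Real.exp_nonneg _)
      _ = Real.exp (sp * (Real.exp ε - 1 - ε - ε ^ 2)) := by
          rw [← Real.exp_add]; congr 1; ring
      _ ≤ Real.exp (-(0.4 * ε ^ 2 * sp)) := by
          apply Real.exp_le_exp.mpr
          have hq := exp_le_quad (x := ε) (by rwa [abs_of_nonneg hε0])
          nlinarith [hsp0]
  have hlo : (π {x | X x ≤ (1 - ε) * sp}).toReal ≤ Real.exp (-(0.4 * ε ^ 2 * sp)) := by
    refine (measure_le_le_exp_mul_mgf (μ := π) (X := X) (t := -ε) ((1 - ε) * sp)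
      (by linarith) Integrable.of_finite).trans ?_
    rw [hmgfX]
    calc Real.exp (-(-ε) * ((1 - ε) * sp)) * (p * Real.exp (-ε) + (1 - p)) ^ S.card
        ≤ Real.exp (-(-ε) * ((1 - ε) * sp)) * Real.exp (sp * (Real.exp (-ε) - 1)) :=
          mul_le_mul_of_nonneg_left (hbase (-ε)) (Real.exp_nonneg _)
      _ = Real.exp (sp * (Real.exp (-ε) - 1 + ε - ε ^ 2)) := by
          rw [← Real.exp_add]; congr 1; ring
      _ ≤ Real.exp (-(0.4 * ε ^ 2 * sp)) := by
          apply Real.exp_le_exp.mpr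
          have hq := exp_le_quad (x := -ε) (by rw [abs_neg]; rwa [abs_of_nonneg hε0])
          nlinarith [hsp0]
  have hsub : {x : Fin n → Bool | ε * sp ≤ |X x - sp|}
      ⊆ {x | (1 + ε) * sp ≤ X x} ∪ {x | X x ≤ (1 - ε) * sp} := by
    intro x hx
    simp only [Set.mem_setOf_eq] at hx
    rcases abs_cases (X x - sp) with ⟨he, _⟩ | ⟨he, _⟩
    · left
      simp only [Set.mem_setOf_eq]
      nlinarith
    · right
      simp only [Set.mem_setOf_eq]
      nlinarith
  have hmeasle : π {x | ε * sp ≤ |X x - sp|}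
      ≤ π {x | (1 + ε) * sp ≤ X x} + π {x | X x ≤ (1 - ε) * sp} :=
    (measure_mono hsub).trans (measure_union_le _ _)
  have htr := ENNReal.toReal_mono
    (ENNReal.add_ne_top.mpr ⟨measure_ne_top _ _, measure_ne_top _ _⟩) hmeasle
  rw [ENNReal.toReal_add (measure_ne_top _ _) (measure_ne_top _ _)] at htr
  calc (π {x | ε * sp ≤ |X x - sp|}).toReal
      ≤ (π {x | (1 + ε) * sp ≤ X x}).toReal + (π {x | X x ≤ (1 - ε) * sp}).toReal := htr
    _ ≤ 2 * Real.exp (-(0.4 * ε ^ 2 * sp)) := by linarith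

lemma factorial_lower (k : ℕ) : ((k : ℝ) / Real.exp 1) ^ k ≤ k.factorial := by
  have h := Real.sum_le_exp_of_nonneg (x := (k : ℝ)) (Nat.cast_nonneg k) (k + 1)
  have hterm : (k : ℝ) ^ k / k.factorial ≤ Real.exp k := by
    refine le_trans ?_ h
    refine Finset.single_le_sum (f := fun i => (k : ℝ) ^ i / i.factorial) ?_ ?_
    · intro i _
      positivity
    · exact Finset.self_mem_range_succ k
  have hfac : (0 : ℝ) < k.factorial := by positivity
  have hek : Real.exp ((k : ℝ)) = (Real.exp 1) ^ k := by
    rw [← Real.exp_nat_mul]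
    norm_num
  rw [div_pow]
  rw [div_le_iff₀ (by positivity)]
  rw [hek] at hterm
  rw [div_le_iff₀ hfac] at hterm
  linarith [hterm]

lemma prob_bound (n mn : ℕ) {p ε : ℝ} (h0 : 0 ≤ p) (h1 : p ≤ 1) (hε0 : 0 ≤ ε)
    (hε1 : ε ≤ 0.45) (S : Finset (Fin n)) (k : ℕ) (hk1 : 0 < k)
    (hqk : Real.exp 1 * mn * (2 * Real.exp (-(0.4 * ε ^ 2 * (S.card * p))))
      ≤ (k : ℝ) * Real.exp (-1)) :
    rigMeasure n mn p {ω | k ≤ MS ω S ε p} ≤ ENNReal.ofReal (Real.exp (-(k : ℝ))) := by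
  haveI := bernoulliB_isProb h0 h1
  set π : Measure (Fin n → Bool) := Measure.pi fun _ : Fin n => bernoulliB p with hπ
  set cond : (Fin n → Bool) → Prop := fun x =>
    ε * (S.card * p) ≤ |((S.filter fun v => x v = true).card : ℝ) - S.card * p| with hcond
  have hswap : rigMeasure n mn p {ω | k ≤ MS ω S ε p}
      = (Measure.pi fun _ : Fin mn => π)
          {η | k ≤ (Finset.univ.filter fun i : Fin mn => cond (η i)).card} := by
    rw [← rig_map_swap n mn h0 h1,
      Measure.map_apply (measurable_of_countable _) (measurableSet_of_countable _)]
    congr 1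
  rw [hswap]
  have hsub : {η : Fin mn → Fin n → Bool | k ≤ (Finset.univ.filter fun i => cond (η i)).card}
      ⊆ ⋃ T ∈ Finset.powersetCard k (Finset.univ : Finset (Fin mn)), {η | ∀ i ∈ T, cond (η i)} := by
    intro η hη
    obtain ⟨T, hTsub, hTcard⟩ := Finset.exists_subset_card_eq hη
    refine Set.mem_biUnion (Finset.mem_powersetCard.mpr
      ⟨Finset.subset_univ T, hTcard⟩) ?_
    intro i hi
    exact (Finset.mem_filter.mp (hTsub hi)).2
  refine le_trans (measure_mono hsub) ?_
  refine le_trans (measure_biUnion_finset_le _ _) ?_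
  have hT : ∀ T ∈ Finset.powersetCard k (Finset.univ : Finset (Fin mn)),
      (Measure.pi fun _ : Fin mn => π) {η | ∀ i ∈ T, cond (η i)} = (π {x | cond x}) ^ k := by
    intro T hT
    have h := pi_meas_biInter (fun _ : Fin mn => π) T (fun _ => {x | cond x})
    have h2 : {η : Fin mn → Fin n → Bool | ∀ i ∈ T, cond (η i)}
        = {η : Fin mn → Fin n → Bool | ∀ i ∈ T, η i ∈ {x | cond x}} := rfl
    rw [h2, h, Finset.prod_const, (Finset.mem_powersetCard.mp hT).2]
  rw [Finset.sum_congr rfl hT, Finset.sum_const, Finset.card_powersetCard, Finset.card_univ,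
    Fintype.card_fin]
  set qR : ℝ := 2 * Real.exp (-(0.4 * ε ^ 2 * (S.card * p))) with hqR
  have hqR0 : 0 ≤ qR := by positivity
  have hq : π {x | cond x} ≤ ENNReal.ofReal qR := by
    rw [← ENNReal.ofReal_toReal (measure_ne_top π _)]
    exact ENNReal.ofReal_le_ofReal (inner_tail h0 h1 hε0 hε1 S)
  calc (mn.choose k) • (π {x | cond x}) ^ k
      ≤ (mn.choose k) • (ENNReal.ofReal qR) ^ k := by
        rw [nsmul_eq_mul, nsmul_eq_mul]
        exact mul_le_mul_right (pow_le_pow_left' hq k) _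
    _ = ENNReal.ofReal ((mn.choose k) * qR ^ k) := by
        rw [← ENNReal.ofReal_pow hqR0, nsmul_eq_mul, ← ENNReal.ofReal_natCast,
          ← ENNReal.ofReal_mul (by positivity)]
    _ ≤ ENNReal.ofReal (Real.exp (-(k : ℝ))) := by
        apply ENNReal.ofReal_le_ofReal
        -- real inequality
        have hk0 : (0 : ℝ) < k := by exact_mod_cast hk1
        have he1 : (0 : ℝ) < Real.exp 1 := Real.exp_pos 1
        have hfac := factorial_lower k
        have hfacpos : (0 : ℝ) < ((k : ℝ) / Real.exp 1) ^ k := by positivity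
        have hchoose : (mn.choose k : ℝ) ≤ (mn : ℝ) ^ k / k.factorial :=
          Nat.choose_le_pow_div k mn
        have hchoose2 : (mn.choose k : ℝ) ≤ (mn : ℝ) ^ k / ((k : ℝ) / Real.exp 1) ^ k := by
          refine hchoose.trans ?_
          exact div_le_div_of_nonneg_left (by positivity) hfacpos hfac
        have hstep : (mn.choose k : ℝ) * qR ^ k
            ≤ (Real.exp 1 * mn * qR / k) ^ k := by
          have h3 : (mn : ℝ) ^ k / ((k : ℝ) / Real.exp 1) ^ k * qR ^ k
              = (Real.exp 1 * mn * qR / k) ^ k := by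
            rw [← div_pow, ← mul_pow]
            congr 1
            rw [div_div_eq_mul_div]
            ring
          rw [← h3]
          exact mul_le_mul_of_nonneg_right hchoose2 (by positivity)
        refine hstep.trans ?_
        have hbase : Real.exp 1 * mn * qR / k ≤ Real.exp (-1) := by
          rw [div_le_iff₀ hk0]
          calc Real.exp 1 * mn * qR ≤ (k : ℝ) * Real.exp (-1) := hqk
            _ = Real.exp (-1) * k := by ring
        have hbase0 : 0 ≤ Real.exp 1 * mn * qR / k := by positivity
        calc (Real.exp 1 * mn * qR / k) ^ k ≤ (Real.exp (-1)) ^ k :=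
            pow_le_pow_left₀ hbase0 hbase k
          _ = Real.exp (-(k : ℝ)) := by
            rw [← Real.exp_nat_mul]
            norm_num
  done


lemma key_lemma (m : ℕ → ℕ) (p : ℕ → ℝ) (hp : ∀ n, 0 ≤ p n ∧ p n ≤ 1)
    (n : ℕ) (hn1' : 1 ≤ n) (hm1' : 1 ≤ m n) (hr1 : 1 ≤ (m n : ℝ) / n)
    (hL10' : 10 ≤ Real.log (3 / 4 * ((m n : ℝ) / n)))
    (hL01' : 1 ≤ Real.log ((m n : ℝ) / n))
    (h30' : 30 ≤ (n : ℝ) * p n / Real.log ((m n : ℝ) / n)) :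
    ∀ S : Finset (Fin n), n ≤ 2 * S.card →
      rigMeasure n (m n) (p n)
          {ω | 2 * deltan m n * (m n : ℝ) ≤ (MS ω S (epsn m p n) (p n) : ℝ)} ≤
        ENNReal.ofReal (Real.exp (-(n : ℝ))) := by
  intro S hS
  have hnR : (1:ℝ) ≤ n := by exact_mod_cast hn1'
  have hmR : (1:ℝ) ≤ m n := by exact_mod_cast hm1'
  have hp0 := (hp n).1
  have hp1 := (hp n).2
  set L : ℝ := Real.log (3 / 4 * ((m n : ℝ) / n)) with hLdef
  set L0 : ℝ := Real.log ((m n : ℝ) / n) with hL0def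
  have hL0pos : (0:ℝ) < L0 := by linarith
  have hnp30 : 30 * L0 ≤ (n : ℝ) * p n := (le_div_iff₀ hL0pos).mp h30'
  have hnppos : 0 < (n : ℝ) * p n := by linarith
  have hLpos : (0:ℝ) < L := by linarith
  have hLleL0 : L ≤ L0 := by
    apply Real.log_le_log (by positivity)
    linarith
  have hppos : 0 < p n := by
    rcases mul_pos_iff.mp hnppos with ⟨_, h⟩ | ⟨h, _⟩
    · exact h
    · linarith
  have hε2eq : (epsn m p n) ^ 2 = 6 * L / ((n : ℝ) * p n) := by
    rw [epsn, ← hLdef, Real.sq_sqrt (by positivity)]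
  have hε0 : 0 ≤ epsn m p n := Real.sqrt_nonneg _
  have hεsq_small : 6 * L / ((n : ℝ) * p n) ≤ 0.2025 := by
    have c1 : 6 * L / ((n : ℝ) * p n) ≤ 6 * L0 / ((n : ℝ) * p n) := by gcongr
    have c2 : 6 * L0 / ((n : ℝ) * p n) ≤ 6 * L0 / (30 * L0) := by
      apply div_le_div_of_nonneg_left (by linarith) (by linarith) hnp30
    have c3 : 6 * L0 / (30 * L0) = 0.2 := by
      rw [div_eq_iff (by linarith)]
      ring
    linarith
  have hε1 : epsn m p n ≤ 0.45 := by
    have h := Real.sqrt_le_sqrt (by rw [← hε2eq] at hεsq_small; exact hεsq_small :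
      (epsn m p n) ^ 2 ≤ 0.2025)
    rwa [Real.sqrt_sq hε0, show (0.2025:ℝ) = 0.45 ^ 2 by norm_num,
      Real.sqrt_sq (by norm_num)] at h
  set k : ℕ := ⌈(16 / 3 : ℝ) * n⌉₊ with hkdef
  have hk16 : (16 / 3 : ℝ) * n ≤ k := Nat.le_ceil _
  have hkpos : 0 < k := Nat.ceil_pos.mpr (by linarith)
  have h2δ : 2 * deltan m n * (m n : ℝ) = 16 / 3 * n := by
    rw [deltan]
    field_simp
    ring
  have hset : {ω : Fin n → Fin (m n) → Bool |
        2 * deltan m n * (m n : ℝ) ≤ (MS ω S (epsn m p n) (p n) : ℝ)}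
      = {ω | k ≤ MS ω S (epsn m p n) (p n)} := by
    ext ω
    simp only [Set.mem_setOf_eq, h2δ, hkdef]
    exact (Nat.ceil_le).symm
  rw [hset]
  have hScard : (n : ℝ) ≤ 2 * S.card := by exact_mod_cast hS
  have hεsp : (epsn m p n) ^ 2 * (S.card * p n) = 6 * L * S.card / n := by
    rw [hε2eq]
    field_simp
  have h3L : 3 * L ≤ (epsn m p n) ^ 2 * ((S.card : ℝ) * p n) := by
    rw [hεsp, le_div_iff₀ (by linarith : (0:ℝ) < n)]
    nlinarith [hLpos, hScard]
  have hexpL : Real.exp (-L) = 4 / 3 * ((n : ℝ) / m n) := by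
    have hn0 : (n:ℝ) ≠ 0 := by linarith
    have hm0 : (m n : ℝ) ≠ 0 := by linarith
    rw [Real.exp_neg, hLdef, Real.exp_log (by positivity)]
    rw [inv_eq_iff_eq_inv]
    rw [eq_comm]
    refine inv_eq_of_mul_eq_one_left ?_
    field_simp
  have hq1 : Real.exp (-(0.4 * (epsn m p n) ^ 2 * ((S.card : ℝ) * p n)))
      ≤ 4 / 3 * ((n : ℝ) / m n) * Real.exp (-2) := by
    have e1 : Real.exp (-(0.4 * (epsn m p n) ^ 2 * ((S.card : ℝ) * p n)))
        ≤ Real.exp (-(1.2 * L)) := by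
      apply Real.exp_le_exp.mpr
      nlinarith [h3L]
    refine e1.trans ?_
    have e2 : Real.exp (-(1.2 * L)) = Real.exp (-L) * Real.exp (-(0.2 * L)) := by
      rw [← Real.exp_add]
      congr 1
      ring
    rw [e2, hexpL]
    have e3 : Real.exp (-(0.2 * L)) ≤ Real.exp (-2) := Real.exp_le_exp.mpr (by linarith)
    have e4 : (0:ℝ) ≤ 4 / 3 * ((n : ℝ) / m n) := by positivity
    exact mul_le_mul_of_nonneg_left e3 e4
  have hqk : Real.exp 1 * (m n) *
      (2 * Real.exp (-(0.4 * (epsn m p n) ^ 2 * ((S.card : ℝ) * p n))))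
      ≤ (k : ℝ) * Real.exp (-1) := by
    have hm0 : (m n : ℝ) ≠ 0 := by linarith
    calc Real.exp 1 * (m n) *
        (2 * Real.exp (-(0.4 * (epsn m p n) ^ 2 * ((S.card : ℝ) * p n))))
        ≤ Real.exp 1 * (m n) * (2 * (4 / 3 * ((n : ℝ) / m n) * Real.exp (-2))) :=
          mul_le_mul_of_nonneg_left (by linarith [hq1]) (by positivity)
      _ = 8 / 3 * n * (Real.exp 1 * Real.exp (-2)) := by
          field_simp
          ring
      _ = 8 / 3 * n * Real.exp (-1) := by
          rw [← Real.exp_add]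
          norm_num
      _ ≤ (k : ℝ) * Real.exp (-1) := by
          apply mul_le_mul_of_nonneg_right _ (Real.exp_nonneg _)
          linarith [hk16]
  refine le_trans (prob_bound n (m n) hp0 hp1 hε0 hε1 S k hkpos hqk) ?_
  apply ENNReal.ofReal_le_ofReal
  apply Real.exp_le_exp.mpr
  have : (n : ℝ) ≤ k := by linarith [hk16]
  linarith


end Aux

/-- Equation (Eq:MSduze): if `n = o(m)` and `np / ln(m/n) → ∞`, then (eventually)
for each fixed `S` with `|S| ≥ n/2` we have `P(M_S ≥ 2δm) ≤ e^{-n}`, and the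
probability that some `S` with `|S| ≥ n/2` has `M_S ≥ 2δm` tends to `0`. -/
theorem MS_union_bound (m : ℕ → ℕ) (p : ℕ → ℝ)
    (hp : ∀ n, 0 ≤ p n ∧ p n ≤ 1)
    (hm : Tendsto m atTop atTop)
    (h1 : Tendsto (fun n : ℕ => (n : ℝ) / (m n : ℝ)) atTop (nhds 0))
    (h2 : Tendsto (fun n : ℕ => (n : ℝ) * p n / Real.log ((m n : ℝ) / (n : ℝ)))
      atTop atTop) :
    (∀ᶠ n : ℕ in atTop, ∀ S : Finset (Fin n), n ≤ 2 * S.card →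
      rigMeasure n (m n) (p n)
          {ω | 2 * deltan m n * (m n : ℝ) ≤ (MS ω S (epsn m p n) (p n) : ℝ)} ≤
        ENNReal.ofReal (Real.exp (-(n : ℝ)))) ∧
    Tendsto (fun n : ℕ => rigMeasure n (m n) (p n)
        {ω | ∃ S : Finset (Fin n), n ≤ 2 * S.card ∧
          2 * deltan m n * (m n : ℝ) ≤ (MS ω S (epsn m p n) (p n) : ℝ)})
      atTop (nhds 0) := by
  -- basic eventual facts
  have hn1 : ∀ᶠ n : ℕ in atTop, 1 ≤ n := eventually_ge_atTop 1
  have hm1 : ∀ᶠ n : ℕ in atTop, 1 ≤ m n := hm.eventually_ge_atTop 1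
  have hratio : Tendsto (fun n : ℕ => (m n : ℝ) / n) atTop atTop := by
    have hpos : ∀ᶠ n : ℕ in atTop, 0 < (n : ℝ) / (m n : ℝ) := by
      filter_upwards [hn1, hm1] with n hn hm'
      have h1' : (0:ℝ) < n := by exact_mod_cast hn
      have h2' : (0:ℝ) < m n := by exact_mod_cast hm'
      positivity
    have h := Filter.Tendsto.inv_tendsto_nhdsGT_zero
      (tendsto_nhdsWithin_iff.mpr ⟨h1, hpos⟩)
    refine h.congr' ?_
    filter_upwards with n
    rw [Pi.inv_apply, inv_div]
  have hLtend : Tendsto (fun n : ℕ => Real.log (3 / 4 * ((m n : ℝ) / n))) atTop atTop := by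
    have h34 : Tendsto (fun n : ℕ => 3 / 4 * ((m n : ℝ) / n)) atTop atTop :=
      hratio.const_mul_atTop (by norm_num)
    exact Real.tendsto_log_atTop.comp h34
  have hratio1 : ∀ᶠ n : ℕ in atTop, 1 ≤ (m n : ℝ) / n := hratio.eventually_ge_atTop 1
  have hL10 : ∀ᶠ n : ℕ in atTop, 10 ≤ Real.log (3 / 4 * ((m n : ℝ) / n)) :=
    hLtend.eventually_ge_atTop 10
  have hL0tend : Tendsto (fun n : ℕ => Real.log ((m n : ℝ) / n)) atTop atTop :=
    Real.tendsto_log_atTop.comp hratio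
  have hL01 : ∀ᶠ n : ℕ in atTop, 1 ≤ Real.log ((m n : ℝ) / n) := hL0tend.eventually_ge_atTop 1
  have h30 : ∀ᶠ n : ℕ in atTop, 30 ≤ (n : ℝ) * p n / Real.log ((m n : ℝ) / n) :=
    h2.eventually_ge_atTop 30
  -- the key eventual per-S bound
  have key : ∀ᶠ n : ℕ in atTop, ∀ S : Finset (Fin n), n ≤ 2 * S.card →
      rigMeasure n (m n) (p n)
          {ω | 2 * deltan m n * (m n : ℝ) ≤ (MS ω S (epsn m p n) (p n) : ℝ)} ≤
        ENNReal.ofReal (Real.exp (-(n : ℝ))) := by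
    filter_upwards [hn1, hm1, hratio1, hL10, hL01, h30] with n hn1' hm1' hr1 hL10' hL01' h30'
    exact key_lemma m p hp n hn1' hm1' hr1 hL10' hL01' h30'
  refine ⟨key, ?_⟩
  -- part 2
  have hb : ∀ᶠ n : ℕ in atTop,
      rigMeasure n (m n) (p n)
        {ω | ∃ S : Finset (Fin n), n ≤ 2 * S.card ∧
          2 * deltan m n * (m n : ℝ) ≤ (MS ω S (epsn m p n) (p n) : ℝ)}
      ≤ ENNReal.ofReal ((2:ℝ) ^ n * Real.exp (-(n : ℝ))) := by
    filter_upwards [key] with n hkey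
    have hunion : {ω : Fin n → Fin (m n) → Bool | ∃ S : Finset (Fin n), n ≤ 2 * S.card ∧
          2 * deltan m n * (m n : ℝ) ≤ (MS ω S (epsn m p n) (p n) : ℝ)}
        = ⋃ S : Finset (Fin n), {ω | n ≤ 2 * S.card ∧
          2 * deltan m n * (m n : ℝ) ≤ (MS ω S (epsn m p n) (p n) : ℝ)} := by
      ext ω
      simp [Set.mem_iUnion]
    rw [hunion]
    refine le_trans (measure_iUnion_le _) ?_
    have hterm : ∀ S : Finset (Fin n),
        rigMeasure n (m n) (p n) {ω | n ≤ 2 * S.card ∧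
          2 * deltan m n * (m n : ℝ) ≤ (MS ω S (epsn m p n) (p n) : ℝ)}
        ≤ ENNReal.ofReal (Real.exp (-(n : ℝ))) := by
      intro S
      by_cases hS : n ≤ 2 * S.card
      · refine le_trans (measure_mono ?_) (hkey S hS)
        intro ω hω
        exact hω.2
      · have hempty : {ω : Fin n → Fin (m n) → Bool | n ≤ 2 * S.card ∧
            2 * deltan m n * (m n : ℝ) ≤ (MS ω S (epsn m p n) (p n) : ℝ)} = ∅ := by
          ext ω
          simp [hS]
        rw [hempty]
        simp
    refine le_trans (ENNReal.tsum_le_tsum hterm) ?_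
    rw [tsum_fintype, Finset.sum_const, Finset.card_univ, Fintype.card_finset, Fintype.card_fin,
      nsmul_eq_mul]
    calc ((2 ^ n : ℕ) : ENNReal) * ENNReal.ofReal (Real.exp (-(n : ℝ)))
        = ENNReal.ofReal ((2:ℝ) ^ n) * ENNReal.ofReal (Real.exp (-(n : ℝ))) := by
          congr 1
          rw [← ENNReal.ofReal_natCast]
          congr 1
          push_cast
          ring
      _ = ENNReal.ofReal ((2:ℝ) ^ n * Real.exp (-(n : ℝ))) :=
          (ENNReal.ofReal_mul (by positivity)).symm
      _ ≤ ENNReal.ofReal ((2:ℝ) ^ n * Real.exp (-(n : ℝ))) := le_rfl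
  have hzero : Tendsto (fun n : ℕ => ENNReal.ofReal ((2:ℝ) ^ n * Real.exp (-(n : ℝ))))
      atTop (𝓝 0) := by
    have hr : Tendsto (fun n : ℕ => (2:ℝ) ^ n * Real.exp (-(n : ℝ))) atTop (𝓝 0) := by
      have heq : ∀ n : ℕ, (2:ℝ) ^ n * Real.exp (-(n : ℝ)) = (2 * Real.exp (-1)) ^ n := by
        intro n
        rw [mul_pow]
        congr 1
        rw [← Real.exp_nat_mul]
        norm_num
      simp_rw [heq]
      apply tendsto_pow_atTop_nhds_zero_of_lt_one (by positivity)
      have hgt := Real.exp_one_gt_d9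
      have hme : Real.exp (-1) * Real.exp 1 = 1 := by
        rw [← Real.exp_add]
        norm_num
      nlinarith [Real.exp_pos (-1)]
    have hc := (ENNReal.continuous_ofReal.tendsto 0).comp hr
    simpa only [ENNReal.ofReal_zero, Function.comp_def] using hc
  exact tendsto_of_tendsto_of_tendsto_of_le_of_le' tendsto_const_nhds hzero
    (Eventually.of_forall fun n => zero_le) hb


end RIG
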